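/- Let r > 1 and s > 1 with (r²-2)s² - r² > 0. The sphere centered at (0,0,-s) with radius √(s²-1) meets each of the four spheres centered at (±r,0,0), (0,±r,0) with radius √(r²-1) at an angle γ satisfying cos γ = 1/(√(r²-1)·√(s²-1)). -/

import Mathlib

/-- A point of `ℝ³` given by its coordinates. -/
noncomputable def v3 (x y z : ℝ) : EuclideanSpace ℝ (Fin 3) :=
  (WithLp.equiv 2 (Fin 3 → ℝ)).symm ![x, y, z]

lemma v3_sub (x y z x' y' z' : ℝ) :
    v3 x y z - v3 x' y' z' = v3 (x - x') (y - y') (z - z') := by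
  ext i
  fin_cases i <;> simp [v3]

lemma v3_norm_sq (x y z : ℝ) : ‖v3 x y z‖ ^ 2 = x ^ 2 + y ^ 2 + z ^ 2 := by
  rw [EuclideanSpace.norm_eq, Real.sq_sqrt (by positivity)]
  simp [v3, Fin.sum_univ_three, Real.norm_eq_abs, sq_abs]

lemma key (r s : ℝ) (a c p : EuclideanSpace ℝ (Fin 3))
    (hr' : 0 < r ^ 2 - 1) (hs' : 0 < s ^ 2 - 1)
    (hca : ‖c - a‖ ^ 2 = r ^ 2 + s ^ 2)
    (hpa : ‖p - a‖ = Real.sqrt (s ^ 2 - 1))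
    (hpc : ‖p - c‖ = Real.sqrt (r ^ 2 - 1)) :
    Real.cos (InnerProductGeometry.angle (p - a) (c - p)) =
      1 / (Real.sqrt (r ^ 2 - 1) * Real.sqrt (s ^ 2 - 1)) := by
  have hpa2 : ‖p - a‖ ^ 2 = s ^ 2 - 1 := by
    rw [hpa, Real.sq_sqrt hs'.le]
  have hcp : ‖c - p‖ = Real.sqrt (r ^ 2 - 1) := by rw [norm_sub_rev, hpc]
  have hcp2 : ‖c - p‖ ^ 2 = r ^ 2 - 1 := by
    rw [hcp, Real.sq_sqrt hr'.le]
  have hsub : (c - a) - (p - a) = c - p := sub_sub_sub_cancel_right c p a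
  have hexp : ‖c - p‖ ^ 2 = ‖c - a‖ ^ 2 - 2 * inner ℝ (c - a) (p - a) + ‖p - a‖ ^ 2 := by
    rw [← hsub]
    exact norm_sub_sq_real (c - a) (p - a)
  have hin : (inner ℝ (c - a) (p - a) : ℝ) = s ^ 2 := by
    rw [hcp2, hca, hpa2] at hexp; linarith
  have hin2 : (inner ℝ (p - a) (c - p) : ℝ) = 1 := by
    have e1 : (inner ℝ (p - a) (c - a) : ℝ) = s ^ 2 := by rw [real_inner_comm]; exact hin
    have e2 : (inner ℝ (p - a) (p - a) : ℝ) = s ^ 2 - 1 := by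
      rw [real_inner_self_eq_norm_sq, hpa2]
    rw [← hsub, inner_sub_right, e1, e2]; ring
  rw [InnerProductGeometry.cos_angle, hin2, hpa, hcp]
  rw [mul_comm]

/-- Let `r > 1` and `s > 1` with `(r²-2)s² - r² > 0`. The sphere centered at `(0,0,-s)`
with radius `√(s²-1)` meets each of the four spheres centered at `(±r,0,0)`, `(0,±r,0)`
with radius `√(r²-1)` at an angle `γ` satisfying `cos γ = 1/(√(r²-1)·√(s²-1))`. -/
theorem base_side_angle (r s : ℝ) (hr : 1 < r) (hs : 1 < s)
    (h : 0 < (r^2-2)*s^2 - r^2) :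
    ∀ c ∈ ({v3 r 0 0, v3 (-r) 0 0, v3 0 r 0, v3 0 (-r) 0} :
        Set (EuclideanSpace ℝ (Fin 3))),
      ∀ p ∈ Metric.sphere (v3 0 0 (-s)) (Real.sqrt (s^2-1)) ∩
             Metric.sphere c (Real.sqrt (r^2-1)),
        Real.cos (InnerProductGeometry.angle (p - v3 0 0 (-s)) (c - p)) =
          1/(Real.sqrt (r^2-1) * Real.sqrt (s^2-1)) := by
  have hr' : 0 < r ^ 2 - 1 := by nlinarith
  have hs' : 0 < s ^ 2 - 1 := by nlinarith
  intro c hc p hp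
  obtain ⟨hp1, hp2⟩ := hp
  rw [Metric.mem_sphere, dist_eq_norm] at hp1 hp2
  have hca : ‖c - v3 0 0 (-s)‖ ^ 2 = r ^ 2 + s ^ 2 := by
    simp only [Set.mem_insert_iff, Set.mem_singleton_iff] at hc
    rcases hc with rfl | rfl | rfl | rfl <;>
      · rw [v3_sub, v3_norm_sq]; ring
  exact key r s (v3 0 0 (-s)) c p hr' hs' hca hp1 hp2
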